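/- Let N > ps, p > 1, s ∈ (0,1). Suppose u ∈ Ẇ^{s,p}(ℝ^N) weakly solves (-Δ_p)^s u = f in ℝ^N with f ∈ L¹(ℝ^N). Then ‖u‖_{L^{p*/p', ∞}} ≤ C(N,p,s) ‖f‖_{L¹}^{1/(p−1)}, i.e. sup_{k>0} k |{|u| > k}|^{p'/p*} ≤ C ‖f‖_1^{1/(p−1)}, where p* = Np/(N−ps) and p' = p/(p−1). -/

import Mathlib

open MeasureTheory
open scoped ENNReal

/-- Gagliardo seminorm to the `p`-th power. -/
noncomputable def gaglP (N : ℕ) (s p : ℝ) (u : EuclideanSpace ℝ (Fin N) → ℝ) : ℝ≥0∞ :=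
  ∫⁻ x, ∫⁻ y, ENNReal.ofReal (|u x - u y| ^ p / ‖x - y‖ ^ ((N : ℝ) + p * s))

/-- `u` weakly solves `(-Δ_p)^s u = f` in `ℝ^N`: for every suitable test function `φ`
(i.e. `φ ∈ Ẇ^{s,p}` with `fφ ∈ L¹`), the fractional `p`-Laplacian form of `u` at `φ`
equals `∫ f φ`. -/
def IsWeakSolution (N : ℕ) (s p : ℝ) (u f : EuclideanSpace ℝ (Fin N) → ℝ) : Prop :=
  ∀ φ : EuclideanSpace ℝ (Fin N) → ℝ, Measurable φ → gaglP N s p φ < ⊤ →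
    Integrable (fun x => f x * φ x) →
    (∫ x, ∫ y, (|u x - u y| ^ (p - 2) * (u x - u y) * (φ x - φ y)) /
        ‖x - y‖ ^ ((N : ℝ) + p * s)) = ∫ x, f x * φ x

namespace Stmt16Aux

/-! ### Truncation -/

/-- clamp to `[-c, c]`. -/
def clamp (c t : ℝ) : ℝ := max (-c) (min c t)

/-- the band truncation: `0` on `[-c,c]`, then linear, capped at `±c`. -/
def trunc (c t : ℝ) : ℝ := clamp c (t - clamp c t)

lemma clamp_mono (c : ℝ) {a b : ℝ} (h : a ≤ b) : clamp c a ≤ clamp c b :=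
  max_le_max le_rfl (min_le_min le_rfl h)

lemma clamp_sub_le (c : ℝ) {a b : ℝ} (_ : a ≤ b) : clamp c b - clamp c a ≤ b - a := by
  unfold clamp
  rcases le_total c a with h1 | h1 <;> rcases le_total c b with h2 | h2 <;>
    rcases le_total (-c) a with h3 | h3 <;> rcases le_total (-c) b with h4 | h4 <;>
    simp [max_def, min_def] <;> split_ifs <;> linarith

lemma neg_le_clamp (c t : ℝ) : -c ≤ clamp c t := le_max_left _ _

lemma clamp_le (hc : 0 ≤ c) (t : ℝ) : clamp c t ≤ c :=
  max_le (by linarith) (min_le_left _ _)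

lemma clamp_of_mem {c t : ℝ} (h1 : -c ≤ t) (h2 : t ≤ c) : clamp c t = t := by
  unfold clamp; rw [min_eq_right h2, max_eq_right h1]

lemma clamp_of_ge {c t : ℝ} (hc : 0 ≤ c) (h : c ≤ t) : clamp c t = c := by
  unfold clamp
  rw [min_eq_left h, max_eq_right (by linarith : -c ≤ c)]

lemma clamp_of_le {c t : ℝ} (hc : 0 ≤ c) (h : t ≤ -c) : clamp c t = -c := by
  unfold clamp
  rw [min_eq_right (by linarith), max_eq_left h]

lemma trunc_mono (c : ℝ) {a b : ℝ} (h : a ≤ b) : trunc c a ≤ trunc c b := by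
  apply clamp_mono
  have := clamp_sub_le c h
  linarith

lemma trunc_sub_le (c : ℝ) {a b : ℝ} (h : a ≤ b) : trunc c b - trunc c a ≤ b - a := by
  have h1 : (b - clamp c b) - (a - clamp c a) ≤ b - a := by
    have := clamp_mono c h; linarith
  have h2 : a - clamp c a ≤ b - clamp c b := by
    have := clamp_sub_le c h; linarith
  calc trunc c b - trunc c a ≤ (b - clamp c b) - (a - clamp c a) := clamp_sub_le c h2
    _ ≤ b - a := h1

lemma abs_trunc_le (hc : 0 ≤ c) (t : ℝ) : |trunc c t| ≤ c :=
  abs_le.2 ⟨neg_le_clamp _ _, clamp_le hc _⟩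

lemma trunc_lip (c : ℝ) (a b : ℝ) : |trunc c a - trunc c b| ≤ |a - b| := by
  rcases le_total a b with h | h
  · rw [abs_sub_comm, abs_sub_comm a b,
      abs_of_nonneg (sub_nonneg.2 (trunc_mono c h)), abs_of_nonneg (sub_nonneg.2 h)]
    exact trunc_sub_le c h
  · rw [abs_of_nonneg (sub_nonneg.2 (trunc_mono c h)), abs_of_nonneg (sub_nonneg.2 h)]
    exact trunc_sub_le c h

lemma trunc_eq_zero (hc : 0 ≤ c) {t : ℝ} (h : |t| ≤ c) : trunc c t = 0 := by
  obtain ⟨h1, h2⟩ := abs_le.1 h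
  unfold trunc
  rw [clamp_of_mem h1 h2, sub_self, clamp_of_mem (by linarith) hc]

lemma trunc_of_ge (hc : 0 ≤ c) {t : ℝ} (h : 2 * c ≤ t) : trunc c t = c := by
  unfold trunc
  have h1 : clamp c t = c := clamp_of_ge hc (by linarith)
  rw [h1]
  exact clamp_of_ge hc (by linarith)

lemma trunc_of_le (hc : 0 ≤ c) {t : ℝ} (h : t ≤ -(2 * c)) : trunc c t = -c := by
  unfold trunc
  have h1 : clamp c t = -c := clamp_of_le hc (by linarith)
  rw [h1]
  exact clamp_of_le hc (by linarith)

lemma abs_trunc_of_ge (hc : 0 ≤ c) {t : ℝ} (h : 2 * c ≤ |t|) : |trunc c t| = c := by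
  rcases abs_cases t with ⟨h1, _⟩ | ⟨h1, _⟩
  · rw [trunc_of_ge hc (h1 ▸ h), abs_of_nonneg hc]
  · rw [trunc_of_le hc (by linarith), abs_neg, abs_of_nonneg hc]

lemma trunc_continuous (c : ℝ) : Continuous (trunc c) := by
  unfold trunc clamp; fun_prop

/-! ### The key pointwise inequality -/

lemma key_aux {p : ℝ} (hp : 1 < p) {C D : ℝ} (hC : 0 ≤ C) (hCD : C ≤ D) :
    C ^ p ≤ D ^ (p - 2) * D * C ∧ D ^ (p - 2) * D * C ≤ D ^ p := by
  have hD : 0 ≤ D := le_trans hC hCD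
  rcases eq_or_lt_of_le hD with hD0 | hD0
  · have hC0 : C = 0 := le_antisymm (hD0 ▸ hCD) hC
    have hpne : p ≠ 0 := (by linarith : (0:ℝ) < p).ne'
    simp [← hD0, hC0, Real.zero_rpow hpne]
  · have hDpow : D ^ (p - 2) * D = D ^ (p - 1) := by
      have := Real.rpow_add_one hD0.ne' (p - 2)
      rw [show p - 2 + 1 = p - 1 by ring] at this
      rw [this]
    rw [hDpow]
    constructor
    · rcases eq_or_lt_of_le hC with hC0 | hC0
      · rw [← hC0, Real.zero_rpow (by positivity), mul_zero]
      · have h1 : C ^ (p - 1) * C = C ^ p := by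
          have := Real.rpow_add_one hC0.ne' (p - 1)
          rw [show p - 1 + 1 = p by ring] at this
          rw [← this]
        rw [← h1]
        exact mul_le_mul_of_nonneg_right
          (Real.rpow_le_rpow hC hCD (by linarith)) hC
    · have h1 : D ^ (p - 1) * D = D ^ p := by
        have := Real.rpow_add_one hD0.ne' (p - 1)
        rw [show p - 1 + 1 = p by ring] at this
        rw [← this]
      rw [← h1]
      exact mul_le_mul_of_nonneg_left hCD (Real.rpow_nonneg hD _)

lemma key {p : ℝ} (hp : 1 < p) (c : ℝ) (a b : ℝ) :
    |trunc c a - trunc c b| ^ p ≤ |a - b| ^ (p - 2) * (a - b) * (trunc c a - trunc c b) ∧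
      |a - b| ^ (p - 2) * (a - b) * (trunc c a - trunc c b) ≤ |a - b| ^ p := by
  rcases le_total b a with h | h
  · have h1 : 0 ≤ trunc c a - trunc c b := sub_nonneg.2 (trunc_mono c h)
    have h2 : trunc c a - trunc c b ≤ a - b := trunc_sub_le c h
    have hab : |a - b| = a - b := abs_of_nonneg (by linarith)
    have habs : |trunc c a - trunc c b| = trunc c a - trunc c b := abs_of_nonneg h1
    rw [hab, habs]
    exact key_aux hp h1 h2
  · have h1 : 0 ≤ trunc c b - trunc c a := sub_nonneg.2 (trunc_mono c h)
    have h2 : trunc c b - trunc c a ≤ b - a := trunc_sub_le c h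
    have hab : |a - b| = b - a := by rw [abs_sub_comm]; exact abs_of_nonneg (by linarith)
    have habs : |trunc c a - trunc c b| = trunc c b - trunc c a := by
      rw [abs_sub_comm]; exact abs_of_nonneg h1
    have hmul : (a - b) * (trunc c a - trunc c b) = (b - a) * (trunc c b - trunc c a) := by
      ring
    rw [hab, habs, mul_assoc, hmul, ← mul_assoc]
    exact key_aux hp h1 h2

/-! ### Monotonicity of the Gagliardo energy -/

lemma gaglP_mono {N : ℕ} {s p : ℝ} (hp : 0 ≤ p) {u v : EuclideanSpace ℝ (Fin N) → ℝ}
    (h : ∀ x y, |v x - v y| ≤ |u x - u y|) : gaglP N s p v ≤ gaglP N s p u := by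
  refine lintegral_mono fun x => lintegral_mono fun y => ?_
  apply ENNReal.ofReal_le_ofReal
  rw [div_eq_mul_inv, div_eq_mul_inv]
  exact mul_le_mul_of_nonneg_right (Real.rpow_le_rpow (abs_nonneg _) (h x y) hp)
    (inv_nonneg.2 (Real.rpow_nonneg (norm_nonneg _) _))

/-! ### The energy estimate from testing with a truncation -/

lemma energy {N : ℕ} {s p : ℝ} (hp : 1 < p) {u f : EuclideanSpace ℝ (Fin N) → ℝ}
    (hu : Measurable u) (hgu : gaglP N s p u < ⊤) (hf : Integrable f)
    (hsol : IsWeakSolution N s p u f) {c : ℝ} (hc : 0 < c) :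
    gaglP N s p (fun x => trunc c (u x)) ≤ ENNReal.ofReal (c * ∫ x, |f x|) := by
  set ψ : EuclideanSpace ℝ (Fin N) → ℝ := fun x => trunc c (u x) with hψdef
  have hψm : Measurable ψ := (trunc_continuous c).measurable.comp hu
  have hlip : ∀ x y, |ψ x - ψ y| ≤ |u x - u y| := fun x y => trunc_lip c (u x) (u y)
  have hgψ : gaglP N s p ψ ≤ gaglP N s p u := gaglP_mono (by linarith) hlip
  have hfabs : Integrable (fun x => c * |f x|) := (hf.abs.const_mul c)
  have hint : Integrable (fun x => f x * ψ x) := by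
    refine hfabs.mono' (hf.1.mul hψm.aestronglyMeasurable) ?_
    filter_upwards with x
    rw [Real.norm_eq_abs, abs_mul]
    calc |f x| * |ψ x| ≤ |f x| * c :=
          mul_le_mul_of_nonneg_left (abs_trunc_le hc.le (u x)) (abs_nonneg _)
      _ = c * |f x| := mul_comm _ _
  have heq := hsol ψ hψm (lt_of_le_of_lt hgψ hgu) hint
  set α : ℝ := (N : ℝ) + p * s with hα
  -- the weak form integrand, uncurried
  set H : (EuclideanSpace ℝ (Fin N) × EuclideanSpace ℝ (Fin N)) → ℝ :=
    fun z => (|u z.1 - u z.2| ^ (p - 2) * (u z.1 - u z.2) * (ψ z.1 - ψ z.2)) /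
      ‖z.1 - z.2‖ ^ α with hHdef
  have hu1 : Measurable fun z : EuclideanSpace ℝ (Fin N) × EuclideanSpace ℝ (Fin N) =>
      u z.1 - u z.2 := (hu.comp measurable_fst).sub (hu.comp measurable_snd)
  have hψ1 : Measurable fun z : EuclideanSpace ℝ (Fin N) × EuclideanSpace ℝ (Fin N) =>
      ψ z.1 - ψ z.2 := (hψm.comp measurable_fst).sub (hψm.comp measurable_snd)
  have hn1 : Measurable fun z : EuclideanSpace ℝ (Fin N) × EuclideanSpace ℝ (Fin N) =>
      ‖z.1 - z.2‖ := (continuous_fst.sub continuous_snd).norm.measurable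
  have hHm : Measurable H :=
    (((hu1.abs.pow_const _).mul hu1).mul hψ1).div (hn1.pow_const _)
  have hkey : ∀ z : EuclideanSpace ℝ (Fin N) × EuclideanSpace ℝ (Fin N),
      0 ≤ H z ∧ |ψ z.1 - ψ z.2| ^ p / ‖z.1 - z.2‖ ^ α ≤ H z ∧
        H z ≤ |u z.1 - u z.2| ^ p / ‖z.1 - z.2‖ ^ α := by
    intro z
    obtain ⟨k1, k2⟩ := key hp c (u z.1) (u z.2)
    have hd : 0 ≤ (‖z.1 - z.2‖ ^ α)⁻¹ :=
      inv_nonneg.2 (Real.rpow_nonneg (norm_nonneg _) _)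
    have habs : (0:ℝ) ≤ |ψ z.1 - ψ z.2| ^ p := Real.rpow_nonneg (abs_nonneg _) _
    refine ⟨?_, ?_, ?_⟩
    · rw [hHdef]
      simp only [div_eq_mul_inv]
      exact mul_nonneg (le_trans habs k1) hd
    · rw [hHdef]
      simp only [div_eq_mul_inv]
      exact mul_le_mul_of_nonneg_right k1 hd
    · rw [hHdef]
      simp only [div_eq_mul_inv]
      exact mul_le_mul_of_nonneg_right k2 hd
  -- the gagliardo integrands, uncurried, as lintegrals over the product measure
  have hGu : Measurable fun z : EuclideanSpace ℝ (Fin N) × EuclideanSpace ℝ (Fin N) =>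
      ENNReal.ofReal (|u z.1 - u z.2| ^ p / ‖z.1 - z.2‖ ^ α) :=
    ((hu1.abs.pow_const _).div (hn1.pow_const _)).ennreal_ofReal
  have hGψ : Measurable fun z : EuclideanSpace ℝ (Fin N) × EuclideanSpace ℝ (Fin N) =>
      ENNReal.ofReal (|ψ z.1 - ψ z.2| ^ p / ‖z.1 - z.2‖ ^ α) :=
    ((hψ1.abs.pow_const _).div (hn1.pow_const _)).ennreal_ofReal
  have hprod_u : gaglP N s p u = ∫⁻ z, ENNReal.ofReal (|u z.1 - u z.2| ^ p / ‖z.1 - z.2‖ ^ α)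
      ∂(volume.prod volume) := by
    rw [gaglP, ← hα]
    exact lintegral_lintegral hGu.aemeasurable
  have hprod_ψ : gaglP N s p ψ = ∫⁻ z, ENNReal.ofReal (|ψ z.1 - ψ z.2| ^ p / ‖z.1 - z.2‖ ^ α)
      ∂(volume.prod volume) := by
    rw [gaglP, ← hα]
    exact lintegral_lintegral hGψ.aemeasurable
  have hHfin : ∫⁻ z, ENNReal.ofReal (H z) ∂(volume.prod volume) < ⊤ := by
    refine lt_of_le_of_lt (lintegral_mono fun z => ENNReal.ofReal_le_ofReal (hkey z).2.2) ?_
    rw [← hprod_u]; exact hgu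
  have hHint : Integrable H (volume.prod volume) :=
    ⟨hHm.aestronglyMeasurable,
      (hasFiniteIntegral_iff_ofReal (ae_of_all _ fun z => (hkey z).1)).2 hHfin⟩
  have hIeq : (∫ x, ∫ y, (|u x - u y| ^ (p - 2) * (u x - u y) * (ψ x - ψ y)) /
      ‖x - y‖ ^ ((N : ℝ) + p * s)) = ∫ z, H z ∂(volume.prod volume) := by
    rw [← hα]
    exact integral_integral
      (f := fun x y => (|u x - u y| ^ (p - 2) * (u x - u y) * (ψ x - ψ y)) / ‖x - y‖ ^ α) hHint
  have hIl : ∫ z, H z ∂(volume.prod volume)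
      = (∫⁻ z, ENNReal.ofReal (H z) ∂(volume.prod volume)).toReal :=
    integral_eq_lintegral_of_nonneg_ae (ae_of_all _ fun z => (hkey z).1)
      hHm.aestronglyMeasurable
  have hfψ : ∫ x, f x * ψ x ≤ c * ∫ x, |f x| := by
    rw [← integral_const_mul]
    refine integral_mono hint hfabs fun x => ?_
    calc f x * ψ x ≤ |f x * ψ x| := le_abs_self _
      _ = |f x| * |ψ x| := abs_mul _ _
      _ ≤ |f x| * c := mul_le_mul_of_nonneg_left (abs_trunc_le hc.le (u x)) (abs_nonneg _)
      _ = c * |f x| := mul_comm _ _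
  calc gaglP N s p ψ
      = ∫⁻ z, ENNReal.ofReal (|ψ z.1 - ψ z.2| ^ p / ‖z.1 - z.2‖ ^ α)
        ∂(volume.prod volume) := hprod_ψ
    _ ≤ ∫⁻ z, ENNReal.ofReal (H z) ∂(volume.prod volume) :=
        lintegral_mono fun z => ENNReal.ofReal_le_ofReal (hkey z).2.1
    _ = ENNReal.ofReal ((∫⁻ z, ENNReal.ofReal (H z) ∂(volume.prod volume)).toReal) :=
        (ENNReal.ofReal_toReal hHfin.ne).symm
    _ = ENNReal.ofReal (∫ z, H z ∂(volume.prod volume)) := by rw [← hIl]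
    _ = ENNReal.ofReal (∫ x, f x * ψ x) := by rw [← hIeq, heq]
    _ ≤ ENNReal.ofReal (c * ∫ x, |f x|) := ENNReal.ofReal_le_ofReal hfψ

/-! ### The two-level potential estimate -/

lemma twoLevel (N : ℕ) (hN : 0 < N) {s p : ℝ} (hp0 : 0 < p) (hs0 : 0 < s) (hps : p * s < N) :
    ∃ Cg : ℝ, 0 < Cg ∧ ∀ w : EuclideanSpace ℝ (Fin N) → ℝ, Measurable w →
      ∀ lam : ℝ, 0 < lam → volume {x | lam / 2 < w x} < ⊤ →
      volume {x | lam < w x} ≤ ENNReal.ofReal Cg * gaglP N s p w *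
        (ENNReal.ofReal ((lam / 2) ^ p))⁻¹ * (volume {x | lam / 2 < w x}) ^ (p * s / N) := by
  haveI : Nonempty (Fin N) := ⟨⟨0, hN⟩⟩
  haveI : Nontrivial (EuclideanSpace ℝ (Fin N)) := inferInstance
  have hNR : (0:ℝ) < N := Nat.cast_pos.2 hN
  set E := EuclideanSpace ℝ (Fin N)
  set ω : ℝ≥0∞ := volume (Metric.ball (0 : E) 1) with hωdef
  have hω0 : 0 < ω := Metric.measure_ball_pos _ _ one_pos
  have hωt : ω < ⊤ := measure_ball_lt_top
  set ωR : ℝ := ω.toReal with hωRdef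
  have hωR : 0 < ωR := ENNReal.toReal_pos hω0.ne' hωt.ne
  set cN : ℝ := 2 ^ N - 1 with hcNdef
  have hcN : 0 < cN := by
    have : (1:ℝ) < 2 ^ N := one_lt_pow₀ (by norm_num) hN.ne'
    simp only [hcNdef]; linarith
  set α : ℝ := (N : ℝ) + p * s with hα
  have hα0 : 0 < α := by positivity
  refine ⟨2 ^ α * (2 / (cN * ωR)) ^ (α / (N:ℝ)), by positivity, ?_⟩
  intro w hw lam hlam hfin
  set Cg : ℝ := 2 ^ α * (2 / (cN * ωR)) ^ (α / (N:ℝ)) with hCgdef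
  have hCg : 0 < Cg := by positivity
  set m' : ℝ≥0∞ := volume {x | lam / 2 < w x} with hm'def
  have hAsub : {x : E | lam < w x} ⊆ {x : E | lam / 2 < w x} := by
    intro x hx
    simp only [Set.mem_setOf_eq] at hx ⊢
    linarith
  rcases eq_or_ne m' 0 with h0 | h0
  · have : volume {x : E | lam < w x} = 0 :=
      le_antisymm (h0 ▸ measure_mono hAsub) zero_le
    rw [this]; exact zero_le
  have hm't : m' ≠ ⊤ := hfin.ne
  set m'R : ℝ := m'.toReal with hm'Rdef
  have hm'R : 0 < m'R := ENNReal.toReal_pos h0 hm't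
  set r : ℝ := (2 * m'R / (cN * ωR)) ^ (1 / (N:ℝ)) with hrdef
  have hr0 : 0 < r := Real.rpow_pos_of_pos (by positivity) _
  have hrN : r ^ N = 2 * m'R / (cN * ωR) := by
    rw [hrdef, ← Real.rpow_natCast ((2 * m'R / (cN * ωR)) ^ (1 / (N:ℝ))) N,
      ← Real.rpow_mul (by positivity), one_div, inv_mul_cancel₀ hNR.ne', Real.rpow_one]
  have hballvol : ∀ (x : E) (t : ℝ), 0 ≤ t →
      volume (Metric.ball x t) = ENNReal.ofReal (t ^ N) * ω := by
    intro x t ht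
    rw [hωdef, Measure.addHaar_ball volume x ht, finrank_euclideanSpace_fin]
  -- the annulus has measure exactly 2 * m'
  have hannvol : ∀ x : E, volume (Metric.ball x (2 * r) \ Metric.ball x r) = 2 * m' := by
    intro x
    rw [measure_diff (Metric.ball_subset_ball (by linarith)) measurableSet_ball.nullMeasurableSet
      measure_ball_lt_top.ne, hballvol x _ (by positivity), hballvol x _ hr0.le]
    rw [mul_pow, ← ENNReal.sub_mul (fun _ _ => hωt.ne), ← ENNReal.ofReal_sub _ (by positivity)]
    have h1 : (2:ℝ) ^ N * r ^ N - r ^ N = 2 * m'R / ωR := by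
      rw [hrN]; field_simp; ring
    rw [h1, ENNReal.ofReal_div_of_pos hωR, hωRdef, ENNReal.ofReal_toReal hωt.ne,
      ENNReal.div_mul_cancel hω0.ne' hωt.ne, ENNReal.ofReal_mul (by norm_num),
      ENNReal.ofReal_ofNat, hm'Rdef, ENNReal.ofReal_toReal hm't]
  -- the annulus intersected with the low sublevel set has measure at least m'
  have hDann : ∀ x : E,
      m' ≤ volume ((Metric.ball x (2 * r) \ Metric.ball x r) ∩ {y | w y ≤ lam / 2}) := by
    intro x
    set ann := Metric.ball x (2 * r) \ Metric.ball x r with hanndef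
    have hsub : ann ⊆ (ann ∩ {y | w y ≤ lam / 2}) ∪ {y | lam / 2 < w y} := by
      intro y hy
      by_cases h : w y ≤ lam / 2
      · exact Or.inl ⟨hy, h⟩
      · exact Or.inr (not_le.1 h)
    have h1 : volume ann ≤ volume (ann ∩ {y | w y ≤ lam / 2}) + m' :=
      le_trans (measure_mono hsub) (measure_union_le _ _)
    rw [hannvol x, two_mul] at h1
    exact (ENNReal.add_le_add_iff_right hm't).1 h1
  -- the inner potential bound for x in the top level set
  set κ : ℝ≥0∞ := ENNReal.ofReal ((lam / 2) ^ p / (2 * r) ^ α) with hκdef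
  have hker : ∀ x ∈ {x : E | lam < w x},
      ∀ y ∈ (Metric.ball x (2 * r) \ Metric.ball x r) ∩ {y | w y ≤ lam / 2},
      κ ≤ ENNReal.ofReal (|w x - w y| ^ p / ‖x - y‖ ^ α) := by
    intro x hx y hy
    apply ENNReal.ofReal_le_ofReal
    have hy1 : dist y x < 2 * r := (Metric.mem_ball.1 hy.1.1)
    have hnorm : ‖x - y‖ ≤ 2 * r := by
      rw [← dist_eq_norm, dist_comm]; exact hy1.le
    have hwx : lam < w x := hx
    have hwy : w y ≤ lam / 2 := hy.2
    have hxy : r ≤ ‖x - y‖ := by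
      have h2 := hy.1.2
      rw [Metric.mem_ball, not_lt] at h2
      rw [← dist_eq_norm, dist_comm]
      exact h2
    have hnum : (lam / 2) ^ p ≤ |w x - w y| ^ p := by
      apply Real.rpow_le_rpow (by linarith) _ hp0.le
      calc lam / 2 ≤ w x - w y := by linarith
        _ ≤ |w x - w y| := le_abs_self _
    exact div_le_div₀ (Real.rpow_nonneg (abs_nonneg _) _) hnum
      (Real.rpow_pos_of_pos (lt_of_lt_of_le hr0 hxy) _)
      (Real.rpow_le_rpow (norm_nonneg _) hnorm hα0.le)
  have hKm : Measurable fun z : E × E => ENNReal.ofReal (|w z.1 - w z.2| ^ p / ‖z.1 - z.2‖ ^ α) :=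
    ((((hw.comp measurable_fst).sub (hw.comp measurable_snd)).abs.pow_const _).div
      ((continuous_fst.sub continuous_snd).norm.measurable.pow_const _)).ennreal_ofReal
  have hIm : Measurable fun x : E => ∫⁻ y, ENNReal.ofReal (|w x - w y| ^ p / ‖x - y‖ ^ α) :=
    hKm.lintegral_prod_right'
  have hAmeas : MeasurableSet {x : E | lam < w x} := measurableSet_lt measurable_const hw
  have hinner : ∀ x ∈ {x : E | lam < w x},
      κ * m' ≤ ∫⁻ y, ENNReal.ofReal (|w x - w y| ^ p / ‖x - y‖ ^ α) := by
    intro x hx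
    set S := (Metric.ball x (2 * r) \ Metric.ball x r) ∩ {y | w y ≤ lam / 2} with hSdef
    have hSm : MeasurableSet S :=
      (measurableSet_ball.diff measurableSet_ball).inter (measurableSet_le hw measurable_const)
    calc κ * m' ≤ κ * volume S := mul_le_mul_right (hDann x) κ
      _ = ∫⁻ _ in S, κ := (setLIntegral_const S κ).symm
      _ ≤ ∫⁻ y in S, ENNReal.ofReal (|w x - w y| ^ p / ‖x - y‖ ^ α) := by
          refine setLIntegral_mono ?_ (hker x hx)
          exact (((measurable_const.sub hw).abs.pow_const _).div
            ((Continuous.measurable (by fun_prop : Continuous fun y : E => ‖x - y‖)).pow_const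
              _)).ennreal_ofReal
      _ ≤ ∫⁻ y, ENNReal.ofReal (|w x - w y| ^ p / ‖x - y‖ ^ α) :=
          setLIntegral_le_lintegral _ _
  have hmain : κ * m' * volume {x : E | lam < w x} ≤ gaglP N s p w := by
    calc κ * m' * volume {x : E | lam < w x}
        = ∫⁻ _ in {x : E | lam < w x}, κ * m' := (setLIntegral_const _ _).symm
      _ ≤ ∫⁻ x in {x : E | lam < w x}, ∫⁻ y, ENNReal.ofReal (|w x - w y| ^ p / ‖x - y‖ ^ α) :=
          setLIntegral_mono hIm hinner
      _ ≤ ∫⁻ x, ∫⁻ y, ENNReal.ofReal (|w x - w y| ^ p / ‖x - y‖ ^ α) :=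
          setLIntegral_le_lintegral _ _
      _ = gaglP N s p w := by rw [gaglP, ← hα]
  -- now solve for the measure of the top level set
  have hY0 : κ * m' ≠ 0 := by
    apply mul_ne_zero _ h0
    rw [hκdef]
    simp only [ne_eq, ENNReal.ofReal_eq_zero, not_le]
    positivity
  have hYt : κ * m' ≠ ⊤ := ENNReal.mul_ne_top ENNReal.ofReal_ne_top hm't
  have hfinal : volume {x : E | lam < w x} ≤ (κ * m')⁻¹ * gaglP N s p w := by
    calc volume {x : E | lam < w x}
        = (κ * m')⁻¹ * (κ * m' * volume {x : E | lam < w x}) := by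
          rw [← mul_assoc, ENNReal.inv_mul_cancel hY0 hYt, one_mul]
      _ ≤ (κ * m')⁻¹ * gaglP N s p w := mul_le_mul_right hmain _
  refine le_trans hfinal ?_
  -- finally, identify the constant
  have hl2p : (0:ℝ) < (lam / 2) ^ p := Real.rpow_pos_of_pos (by linarith) _
  have h2rp : (0:ℝ) < (2 * r) ^ α := Real.rpow_pos_of_pos (by linarith) _
  have hYeq : κ * m' = ENNReal.ofReal ((lam / 2) ^ p / (2 * r) ^ α * m'R) := by
    rw [ENNReal.ofReal_mul (le_of_lt (div_pos hl2p h2rp)), hm'Rdef,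
      ENNReal.ofReal_toReal hm't, hκdef]
  have hκm' : (κ * m')⁻¹ = ENNReal.ofReal (((lam / 2) ^ p / (2 * r) ^ α * m'R)⁻¹) := by
    rw [hYeq, ENNReal.ofReal_inv_of_pos (mul_pos (div_pos hl2p h2rp) hm'R)]
  have hconst : ((lam / 2) ^ p / (2 * r) ^ α * m'R)⁻¹
      = Cg * ((lam / 2) ^ p)⁻¹ * m'R ^ (p * s / (N:ℝ)) := by
    have hrα : r ^ α = (2 / (cN * ωR)) ^ (α / (N:ℝ)) * m'R ^ (α / (N:ℝ)) := by
      rw [hrdef, ← Real.rpow_mul (by positivity), one_div, inv_mul_eq_div,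
        ← Real.mul_rpow (by positivity) hm'R.le]
      congr 1
      field_simp
    have h2rα : (2 * r) ^ α = 2 ^ α * r ^ α := Real.mul_rpow (by norm_num) hr0.le
    have hexp : α / (N:ℝ) = p * s / (N:ℝ) + 1 := by
      rw [hα]; field_simp; ring
    rw [h2rα, hrα, hCgdef, hexp, Real.rpow_add hm'R, Real.rpow_one]
    have h1 : ((lam/2) ^ p) ≠ 0 := hl2p.ne'
    have h2 : ((2:ℝ) / (cN * ωR)) ^ (p * s / (N:ℝ) + 1) ≠ 0 := by positivity
    have h3 : m'R ^ (p * s / (N:ℝ)) ≠ 0 := by positivity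
    field_simp
  rw [hκm', hconst,
    ENNReal.ofReal_mul (mul_nonneg hCg.le (inv_nonneg.2 hl2p.le)),
    ENNReal.ofReal_mul hCg.le, ENNReal.ofReal_inv_of_pos hl2p]
  rw [← ENNReal.ofReal_rpow_of_pos hm'R, hm'Rdef, ENNReal.ofReal_toReal hm't]
  calc ENNReal.ofReal Cg * (ENNReal.ofReal ((lam / 2) ^ p))⁻¹ * m' ^ (p * s / (N:ℝ))
        * gaglP N s p w
      = ENNReal.ofReal Cg * gaglP N s p w * (ENNReal.ofReal ((lam / 2) ^ p))⁻¹
        * m' ^ (p * s / (N:ℝ)) := by ring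
    _ ≤ ENNReal.ofReal Cg * gaglP N s p w * (ENNReal.ofReal ((lam / 2) ^ p))⁻¹
        * m' ^ (p * s / (N:ℝ)) := le_rfl

/-! ### The supremum bootstrap -/

lemma bootstrap {b : ℝ → ℝ≥0∞} {Q : ℝ≥0∞} {σ Λ : ℝ} (hσ0 : 0 < σ) (hσ1 : σ < 1) (hΛ : 0 < Λ)
    (hM : ∃ M : ℝ≥0∞, M ≠ ⊤ ∧ ∀ lam, 0 < lam → lam ≤ Λ → b lam ≤ M)
    (hrec : ∀ lam, 0 < lam → lam ≤ Λ → b lam ≤ Q * (b (lam / 2)) ^ σ) :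
    b Λ ≤ Q ^ (1 / (1 - σ)) := by
  obtain ⟨M, hMt, hMb⟩ := hM
  set S : ℝ≥0∞ := ⨆ (lam : ℝ) (_ : lam ∈ Set.Ioc (0:ℝ) Λ), b lam with hSdef
  have hbS : ∀ lam, lam ∈ Set.Ioc (0:ℝ) Λ → b lam ≤ S := fun lam h =>
    le_iSup₂ (f := fun (lam : ℝ) (_ : lam ∈ Set.Ioc (0:ℝ) Λ) => b lam) lam h
  have hSM : S ≤ M := iSup₂_le fun lam hlam => hMb lam hlam.1 hlam.2
  have hSt : S ≠ ⊤ := (lt_of_le_of_lt hSM hMt.lt_top).ne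
  have hrecS : S ≤ Q * S ^ σ := by
    refine iSup₂_le fun lam hlam => ?_
    obtain ⟨h0, h1⟩ := hlam
    refine (hrec lam h0 h1).trans (mul_le_mul_right ?_ Q)
    exact ENNReal.rpow_le_rpow (hbS _ ⟨half_pos h0, le_trans (by linarith) h1⟩) hσ0.le
  have final : S ≤ Q ^ (1 / (1 - σ)) := by
    rcases eq_or_ne S 0 with h0 | h0
    · rw [h0]; exact zero_le
    · have h1σ : (0:ℝ) < 1 - σ := by linarith
      have hSσ0 : S ^ σ ≠ 0 := by
        simp only [ne_eq, ENNReal.rpow_eq_zero_iff, not_or, not_and, not_lt]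
        exact ⟨fun h => absurd h h0, fun h => absurd h hSt⟩
      have hSσt : S ^ σ ≠ ⊤ := ENNReal.rpow_ne_top_of_nonneg hσ0.le hSt
      have hpow : S ^ (1 - σ) ≤ Q := by
        have h2 : S ^ (1 - σ) * S ^ σ ≤ Q * S ^ σ := by
          calc S ^ (1 - σ) * S ^ σ = S ^ ((1 - σ) + σ) := (ENNReal.rpow_add _ _ h0 hSt).symm
            _ = S := by norm_num
            _ ≤ Q * S ^ σ := hrecS
        exact (ENNReal.mul_le_mul_iff_left hSσ0 hSσt).1 h2
      calc S = (S ^ (1 - σ)) ^ (1 / (1 - σ)) := by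
            rw [← ENNReal.rpow_mul, mul_one_div, div_self h1σ.ne', ENNReal.rpow_one]
        _ ≤ Q ^ (1 / (1 - σ)) := ENNReal.rpow_le_rpow hpow (by positivity)
  exact (hbS Λ ⟨hΛ, le_rfl⟩).trans final

end Stmt16Aux

/-- Weak `L^{p*/p'}` estimate for solutions of `(-Δ_p)^s u = f` with `f ∈ L¹`:
`sup_{k>0} k |{|u|>k}|^{p'/p*} ≤ C ‖f‖₁^{1/(p−1)}`. -/
theorem stmt16 (N : ℕ) (p s : ℝ) (hp : 1 < p) (hs0 : 0 < s) (hs1 : s < 1)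
    (hps : p * s < N) :
    ∃ C > 0, ∀ u f : EuclideanSpace ℝ (Fin N) → ℝ,
      Measurable u → gaglP N s p u < ⊤ →
      (∀ a > 0, volume {x | a < |u x|} < ⊤) →
      Integrable f → IsWeakSolution N s p u f →
      ∀ k > 0,
        ENNReal.ofReal k * (volume {x | k < |u x|}) ^
            ((p / (p - 1)) / ((N : ℝ) * p / ((N : ℝ) - p * s))) ≤
          ENNReal.ofReal (C * (∫ x, |f x|) ^ (1 / (p - 1))) := by
  classical
  have hN : 0 < N := by
    rcases Nat.eq_zero_or_pos N with h | h
    · exfalso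
      subst h
      have h1 : (0:ℝ) < p * s := mul_pos (by linarith) hs0
      simp only [Nat.cast_zero] at hps
      linarith
    · exact h
  have hNR : (0:ℝ) < N := Nat.cast_pos.2 hN
  have hp0 : (0:ℝ) < p := by linarith
  have hpm1 : (0:ℝ) < p - 1 := by linarith
  obtain ⟨Cg, hCg, hTL⟩ := Stmt16Aux.twoLevel N hN hp0 hs0 hps
  set σ : ℝ := p * s / N with hσdef
  have hσ0 : 0 < σ := by positivity
  have hσ1 : σ < 1 := (div_lt_one hNR).2 hps
  have hNps : 0 < (N:ℝ) - p * s := by linarith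
  set γ : ℝ := (N:ℝ) * p / ((N:ℝ) - p * s) with hγdef
  have hγ0 : 0 < γ := by positivity
  have hγident : γ * (1 - σ) = p := by
    rw [hγdef, hσdef]; field_simp
  have hγσ : γ - p = γ * σ := by nlinarith [hγident]
  set θ : ℝ := (p / (p - 1)) / γ with hθdef
  have hθ0 : 0 < θ := by positivity
  have hθval : θ = ((N:ℝ) - p * s) / ((p - 1) * N) := by
    rw [hθdef, hγdef]; field_simp
  have hIdent1 : (1 / (1 - σ)) * θ = 1 / (p - 1) := by
    rw [hθval, hσdef]
    rw [show (1:ℝ) - p * s / N = ((N:ℝ) - p * s) / N by field_simp]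
    field_simp
  have hIdent2 : γ * θ = p / (p - 1) := by
    rw [hθval, hγdef]; field_simp
  have hIdent3 : 1 + 1 / (p - 1) = p / (p - 1) := by field_simp; ring
  have h2γ : (0:ℝ) < 2 ^ γ := Real.rpow_pos_of_pos (by norm_num) γ
  set A : ℝ := 2 ^ γ * Cg / 2 with hAdef
  have hA : 0 < A := div_pos (mul_pos h2γ hCg) (by norm_num)
  refine ⟨4 ^ (p / (p - 1)) * A ^ (1 / (p - 1)),
    mul_pos (Real.rpow_pos_of_pos (by norm_num) _) (Real.rpow_pos_of_pos hA _), ?_⟩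
  intro u f hu hgu hlev hf hsol k hk
  set F : ℝ := ∫ x, |f x| with hFdef
  have hF0 : 0 ≤ F := by rw [hFdef]; exact integral_nonneg fun x => abs_nonneg _
  set ψ : EuclideanSpace ℝ (Fin N) → ℝ := fun x => Stmt16Aux.trunc (k / 2) (u x) with hψdef
  set w : EuclideanSpace ℝ (Fin N) → ℝ := fun x => |ψ x| with hwdef
  have hψm : Measurable ψ := (Stmt16Aux.trunc_continuous (k / 2)).measurable.comp hu
  have hwm : Measurable w := hψm.abs
  have hwlip : ∀ x y, |w x - w y| ≤ |ψ x - ψ y| := fun x y => abs_abs_sub_abs_le_abs_sub _ _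
  have hG1 : gaglP N s p w ≤ gaglP N s p ψ := Stmt16Aux.gaglP_mono (by linarith) hwlip
  have hG2 : gaglP N s p ψ ≤ ENNReal.ofReal (k / 2 * F) := by
    rw [hFdef]
    exact Stmt16Aux.energy hp hu hgu hf hsol (half_pos hk)
  have hGw : gaglP N s p w ≤ ENNReal.ofReal (k / 2 * F) := le_trans hG1 hG2
  have hwsub : ∀ t : ℝ, 0 < t → {x | t < w x} ⊆ {x | k / 2 < |u x|} := by
    intro t ht x hx
    simp only [Set.mem_setOf_eq] at hx ⊢
    by_contra h
    push_neg at h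
    have h2 : ψ x = 0 := Stmt16Aux.trunc_eq_zero (by linarith) h
    have h3 : w x = 0 := by simp only [hwdef, h2, abs_zero]
    rw [h3] at hx
    linarith
  set M : ℝ≥0∞ := volume {x | k / 2 < |u x|} with hMdef
  have hMt : M ≠ ⊤ := (hlev (k / 2) (half_pos hk)).ne
  have hwfin : ∀ t : ℝ, 0 < t → volume {x | t < w x} < ⊤ := fun t ht =>
    lt_of_le_of_lt (measure_mono (hwsub t ht)) (hlev _ (half_pos hk))
  set b : ℝ → ℝ≥0∞ := fun lam => ENNReal.ofReal (lam ^ γ) * volume {x | lam < w x} with hbdef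
  set Q : ℝ≥0∞ := ENNReal.ofReal (2 ^ γ * Cg * (k / 2 * F)) with hQdef
  have hrec : ∀ lam, 0 < lam → lam ≤ k / 4 → b lam ≤ Q * (b (lam / 2)) ^ σ := by
    intro lam h0 h1
    have hl2 : (0:ℝ) < lam / 2 := by linarith
    have hTLw := hTL w hwm lam h0 (hwfin _ hl2)
    have hl2γ : (0:ℝ) < (lam / 2) ^ γ := Real.rpow_pos_of_pos hl2 _
    have hl2p : (0:ℝ) < (lam / 2) ^ p := Real.rpow_pos_of_pos hl2 _
    have e1 : ENNReal.ofReal (lam ^ γ) * (ENNReal.ofReal ((lam / 2) ^ p))⁻¹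
        = ENNReal.ofReal (2 ^ γ * (lam / 2) ^ (γ * σ)) := by
      rw [← ENNReal.ofReal_inv_of_pos hl2p,
        ← ENNReal.ofReal_mul (Real.rpow_nonneg (by linarith) _)]
      congr 1
      have h2 : lam ^ γ = 2 ^ γ * (lam / 2) ^ γ := by
        rw [← Real.mul_rpow (by norm_num) hl2.le]
        congr 1
        ring
      have h3 : (lam / 2) ^ γ * ((lam / 2) ^ p)⁻¹ = (lam / 2) ^ (γ * σ) := by
        rw [← div_eq_mul_inv, ← Real.rpow_sub hl2, hγσ]
      rw [h2, mul_assoc, h3]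
    have hstep2 : ENNReal.ofReal (lam ^ γ) * (ENNReal.ofReal Cg * ENNReal.ofReal (k / 2 * F) *
        (ENNReal.ofReal ((lam / 2) ^ p))⁻¹ * (volume {x | lam / 2 < w x}) ^ σ)
        = Q * (b (lam / 2)) ^ σ := by
      have hb2 : b (lam / 2) = ENNReal.ofReal ((lam / 2) ^ γ) * volume {x | lam / 2 < w x} :=
        rfl
      rw [hb2, ENNReal.mul_rpow_of_nonneg _ _ hσ0.le, ENNReal.ofReal_rpow_of_pos hl2γ,
        ← Real.rpow_mul hl2.le, hQdef]
      rw [show ENNReal.ofReal (lam ^ γ) * (ENNReal.ofReal Cg * ENNReal.ofReal (k / 2 * F) *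
          (ENNReal.ofReal ((lam / 2) ^ p))⁻¹ * (volume {x | lam / 2 < w x}) ^ σ)
        = (ENNReal.ofReal (lam ^ γ) * (ENNReal.ofReal ((lam / 2) ^ p))⁻¹) *
          ENNReal.ofReal Cg * ENNReal.ofReal (k / 2 * F) *
          (volume {x | lam / 2 < w x}) ^ σ from by ring, e1]
      have m1 : ENNReal.ofReal (2 ^ γ * (lam / 2) ^ (γ * σ))
          = ENNReal.ofReal (2 ^ γ) * ENNReal.ofReal ((lam / 2) ^ (γ * σ)) :=
        ENNReal.ofReal_mul h2γ.le
      have m2 : ENNReal.ofReal (2 ^ γ * Cg * (k / 2 * F))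
          = ENNReal.ofReal (2 ^ γ) * ENNReal.ofReal Cg * ENNReal.ofReal (k / 2 * F) := by
        rw [ENNReal.ofReal_mul (mul_nonneg h2γ.le hCg.le), ENNReal.ofReal_mul h2γ.le]
      rw [m1, m2]
      ring
    calc b lam ≤ ENNReal.ofReal (lam ^ γ) * (ENNReal.ofReal Cg * gaglP N s p w *
          (ENNReal.ofReal ((lam / 2) ^ p))⁻¹ * (volume {x | lam / 2 < w x}) ^ σ) :=
        mul_le_mul_right hTLw _
      _ ≤ ENNReal.ofReal (lam ^ γ) * (ENNReal.ofReal Cg * ENNReal.ofReal (k / 2 * F) *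
          (ENNReal.ofReal ((lam / 2) ^ p))⁻¹ * (volume {x | lam / 2 < w x}) ^ σ) := by
          gcongr
      _ = Q * (b (lam / 2)) ^ σ := hstep2
  have hMex : ∃ M' : ℝ≥0∞, M' ≠ ⊤ ∧ ∀ lam, 0 < lam → lam ≤ k / 4 → b lam ≤ M' := by
    refine ⟨ENNReal.ofReal ((k / 4) ^ γ) * M, ENNReal.mul_ne_top ENNReal.ofReal_ne_top hMt, ?_⟩
    intro lam h0 h1
    exact mul_le_mul' (ENNReal.ofReal_le_ofReal (Real.rpow_le_rpow h0.le h1 hγ0.le))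
      (measure_mono (hwsub lam h0))
  have hboot : b (k / 4) ≤ Q ^ (1 / (1 - σ)) :=
    Stmt16Aux.bootstrap hσ0 hσ1 (by linarith) hMex hrec
  -- convert to a bound on the measure of the superlevel set of w at k/4
  have hk4 : (0:ℝ) < k / 4 := by linarith
  have hk4γ : (0:ℝ) < (k / 4) ^ γ := Real.rpow_pos_of_pos hk4 _
  set R1 : ℝ := (A * (k * F)) ^ (1 / (1 - σ)) with hR1def
  have hAkF : (0:ℝ) ≤ A * (k * F) := mul_nonneg hA.le (mul_nonneg hk.le hF0)
  have hR1nn : 0 ≤ R1 := Real.rpow_nonneg hAkF _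
  have hQR1 : Q ^ (1 / (1 - σ)) = ENNReal.ofReal R1 := by
    rw [hQdef, hR1def, show 2 ^ γ * Cg * (k / 2 * F) = A * (k * F) from by rw [hAdef]; ring,
      ENNReal.ofReal_rpow_of_nonneg hAkF (le_of_lt (one_div_pos.2 (by linarith)))]
  have hX4 : volume {x | k / 4 < w x} ≤ ENNReal.ofReal (R1 / (k / 4) ^ γ) := by
    have h1 : ENNReal.ofReal ((k / 4) ^ γ) * volume {x | k / 4 < w x} ≤ ENNReal.ofReal R1 := by
      rw [← hQR1]
      exact hboot
    rw [ENNReal.ofReal_div_of_pos hk4γ]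
    rw [ENNReal.le_div_iff_mul_le
      (Or.inl (ne_of_gt (ENNReal.ofReal_pos.2 hk4γ))) (Or.inl ENNReal.ofReal_ne_top)]
    rw [mul_comm]
    exact h1
  have hsub2 : {x | k < |u x|} ⊆ {x | k / 4 < w x} := by
    intro x hx
    simp only [Set.mem_setOf_eq] at hx ⊢
    have h2 : |ψ x| = k / 2 := by
      simp only [hψdef]
      exact Stmt16Aux.abs_trunc_of_ge (by linarith) (by linarith)
    simp only [hwdef, h2]
    linarith
  have hμ : volume {x | k < |u x|} ≤ volume {x | k / 4 < w x} := measure_mono hsub2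
  have hreal : k * (R1 / (k / 4) ^ γ) ^ θ
      = 4 ^ (p / (p - 1)) * A ^ (1 / (p - 1)) * F ^ (1 / (p - 1)) := by
    rw [hR1def, Real.div_rpow (Real.rpow_nonneg hAkF _) hk4γ.le,
      ← Real.rpow_mul hAkF, ← Real.rpow_mul hk4.le, hIdent1, hIdent2,
      Real.mul_rpow hA.le (mul_nonneg hk.le hF0), Real.mul_rpow hk.le hF0,
      Real.div_rpow hk.le (by norm_num : (0:ℝ) ≤ 4)]
    have hkk : k * k ^ (1 / (p - 1)) = k ^ (p / (p - 1)) := by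
      have h5 := Real.rpow_add hk 1 (1 / (p - 1))
      rw [Real.rpow_one] at h5
      rw [← h5, hIdent3]
    have hkq : (0:ℝ) < k ^ (p / (p - 1)) := Real.rpow_pos_of_pos hk _
    have h4q : (0:ℝ) < (4:ℝ) ^ (p / (p - 1)) := Real.rpow_pos_of_pos (by norm_num) _
    rw [div_div_eq_mul_div, ← mul_comm_div, ← hkk]
    field_simp
  calc ENNReal.ofReal k * (volume {x | k < |u x|}) ^ θ
      ≤ ENNReal.ofReal k * (volume {x | k / 4 < w x}) ^ θ :=
        mul_le_mul_right (ENNReal.rpow_le_rpow hμ hθ0.le) _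
    _ ≤ ENNReal.ofReal k * (ENNReal.ofReal (R1 / (k / 4) ^ γ)) ^ θ :=
        mul_le_mul_right (ENNReal.rpow_le_rpow hX4 hθ0.le) _
    _ = ENNReal.ofReal (k * (R1 / (k / 4) ^ γ) ^ θ) := by
        rw [ENNReal.ofReal_rpow_of_nonneg (div_nonneg hR1nn hk4γ.le) hθ0.le,
          ← ENNReal.ofReal_mul hk.le]
    _ ≤ ENNReal.ofReal (4 ^ (p / (p - 1)) * A ^ (1 / (p - 1)) * F ^ (1 / (p - 1))) :=
        ENNReal.ofReal_le_ofReal (le_of_eq hreal)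
    _ = ENNReal.ofReal (4 ^ (p / (p - 1)) * A ^ (1 / (p - 1)) * F ^ (1 / (p - 1))) := rfl
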